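/- Let f : {-1,1}^n → {-1,1} be a Boolean function and δ > 0. Suppose there is an 𝔽₂-affine subspace H ⊆ {-1,1}^n of co-dimension k (given by k linearly independent parity constraints ∏_{i ∈ supp(v_j)} x_i = b_j, j = 1,…,k) on which f is constant. Then the Rényi Fourier entropy of order 1+δ satisfies H_{1+δ}(f̂²) ≤ 2·(1 + 1/δ)·k. -/

import Mathlib

open Finset

/-- The real value (`1` or `-1`) encoded by a Boolean. -/
noncomputable def bsgn (b : Bool) : ℝ := if b then 1 else -1

/-- The character `χ_S(x) = ∏_{i ∈ S} x_i` on the hypercube `{-1,1}^n`. -/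
noncomputable def chi {n : ℕ} (S : Finset (Fin n)) (x : Fin n → Bool) : ℝ :=
  ∏ i ∈ S, bsgn (x i)

/-- The Fourier coefficient `f̂(S) = E_x [f(x)·χ_S(x)]`. -/
noncomputable def fCoeff {n : ℕ} (f : (Fin n → Bool) → ℝ) (S : Finset (Fin n)) : ℝ :=
  (∑ x : Fin n → Bool, f x * chi S x) / 2 ^ n

/-- The Fourier (Shannon) entropy `H(f̂²) = Σ_S f̂(S)² log₂(1/f̂(S)²)`. -/
noncomputable def fEntropy {n : ℕ} (f : (Fin n → Bool) → ℝ) : ℝ :=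
  ∑ S : Finset (Fin n), (fCoeff f S) ^ 2 * Real.logb 2 (1 / (fCoeff f S) ^ 2)

/-- The Fourier min-entropy `H_∞(f̂²) = min_{S : f̂(S) ≠ 0} log₂(1/f̂(S)²)`. -/
noncomputable def fMinEntropy {n : ℕ} (f : (Fin n → Bool) → ℝ) : ℝ :=
  sInf {y : ℝ | ∃ S : Finset (Fin n),
    fCoeff f S ≠ 0 ∧ y = Real.logb 2 (1 / (fCoeff f S) ^ 2)}

/-- The total influence `Inf(f) = Σ_S |S|·f̂(S)²`. -/
noncomputable def totalInf {n : ℕ} (f : (Fin n → Bool) → ℝ) : ℝ :=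
  ∑ S : Finset (Fin n), (S.card : ℝ) * (fCoeff f S) ^ 2

/-- `f` is a Boolean (`±1`-valued) function. -/
def IsBooleanFunc {n : ℕ} (f : (Fin n → Bool) → ℝ) : Prop := ∀ x, f x = 1 ∨ f x = -1

/-- The Rényi Fourier entropy of order `α`:
`H_α(f̂²) = (1/(1-α)) · log₂ ( Σ_S |f̂(S)|^{2α} )`. -/
noncomputable def renyiEntropy {n : ℕ} (f : (Fin n → Bool) → ℝ) (α : ℝ) : ℝ :=
  (1 / (1 - α)) * Real.logb 2 (∑ S : Finset (Fin n), |fCoeff f S| ^ (2 * α))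

noncomputable def eChar {n : ℕ} (v : Fin n → ZMod 2) (x : Fin n → Bool) : ℝ :=
  ∏ i, bsgn (x i) ^ (v i).val

lemma bsgn_sq (b : Bool) : bsgn b ^ 2 = 1 := by cases b <;> simp [bsgn]

lemma bsgn_cases (b : Bool) : bsgn b = 1 ∨ bsgn b = -1 := by cases b <;> simp [bsgn]

lemma pow_mod_two {t : ℝ} (ht : t ^ 2 = 1) (m : ℕ) : t ^ (m % 2) = t ^ m := by
  conv_rhs => rw [← Nat.div_add_mod m 2, pow_add, pow_mul, ht, one_pow, one_mul]

lemma eChar_add {n : ℕ} (u w : Fin n → ZMod 2) (x : Fin n → Bool) :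
    eChar (u + w) x = eChar u x * eChar w x := by
  unfold eChar
  rw [← Finset.prod_mul_distrib]
  refine Finset.prod_congr rfl fun i _ => ?_
  rw [Pi.add_apply, ZMod.val_add, pow_mod_two (bsgn_sq _), pow_add]

lemma eChar_zero {n : ℕ} (x : Fin n → Bool) : eChar (0 : Fin n → ZMod 2) x = 1 := by
  simp [eChar]

lemma eChar_sum {n k : ℕ} (v : Fin k → (Fin n → ZMod 2)) (T : Finset (Fin k))
    (x : Fin n → Bool) : eChar (∑ j ∈ T, v j) x = ∏ j ∈ T, eChar (v j) x := by
  classical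
  induction T using Finset.induction_on with
  | empty => simp [eChar_zero]
  | @insert a s h ih => rw [Finset.sum_insert h, Finset.prod_insert h, eChar_add, ih]

lemma zmod2_cases (a : ZMod 2) : a = 0 ∨ a = 1 := by
  have h := ZMod.val_lt a
  have inj := ZMod.val_injective 2
  interval_cases h' : a.val
  · left; apply inj; simpa using h'
  · right; apply inj; rw [h', ZMod.val_one]

lemma eChar_eq_chi {n : ℕ} (v : Fin n → ZMod 2) (x : Fin n → Bool) :
    eChar v x = chi (Finset.univ.filter (fun i => v i = 1)) x := by
  unfold eChar chi
  rw [Finset.prod_filter]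
  refine Finset.prod_congr rfl fun i _ => ?_
  rcases zmod2_cases (v i) with h | h <;> simp [h, ZMod.val_one]

lemma eChar_total {n : ℕ} (v : Fin n → ZMod 2) :
    ∑ x : Fin n → Bool, eChar v x = if v = 0 then (2:ℝ) ^ n else 0 := by
  unfold eChar
  rw [← Fintype.prod_sum (fun i b => bsgn b ^ (v i).val)]
  by_cases hv : v = 0
  · simp [hv]
  · rw [if_neg hv]
    obtain ⟨i, hi⟩ := Function.ne_iff.mp hv
    apply Finset.prod_eq_zero (Finset.mem_univ i)
    rcases zmod2_cases (v i) with h | h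
    · exact absurd h hi
    · simp [h, ZMod.val_one, bsgn]

lemma eChar_abs {n : ℕ} (v : Fin n → ZMod 2) (x : Fin n → Bool) :
    eChar v x = 1 ∨ eChar v x = -1 := by
  unfold eChar
  induction (Finset.univ : Finset (Fin n)) using Finset.induction_on with
  | empty => simp
  | @insert a s h ih =>
    rw [Finset.prod_insert h]
    have : bsgn (x a) ^ (v a).val = 1 ∨ bsgn (x a) ^ (v a).val = -1 := by
      rcases bsgn_cases (x a) with h1 | h1 <;> rw [h1]
      · left; simp
      · rcases Nat.even_or_odd (v a).val with he | he
        · left; exact he.neg_one_pow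
        · right; exact he.neg_one_pow
    rcases this with h1 | h1 <;> rcases ih with h2 | h2 <;> rw [h1, h2] <;> norm_num

/-- If `f` is constant on an 𝔽₂-affine subspace of co-dimension `k`
(given by `k` linearly independent parity constraints), then for every `δ > 0` the
Rényi Fourier entropy of order `1+δ` satisfies `H_{1+δ}(f̂²) ≤ 2(1 + 1/δ)·k`. -/
theorem stmt3 {n k : ℕ} (f : (Fin n → Bool) → ℝ) (hf : IsBooleanFunc f)
    (δ : ℝ) (hδ : 0 < δ)
    (v : Fin k → (Fin n → ZMod 2)) (hv : LinearIndependent (ZMod 2) v)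
    (b : Fin k → Bool)
    (hconst : ∀ x y : Fin n → Bool,
      (∀ j, ∏ i ∈ Finset.univ.filter (fun i => v j i = 1), bsgn (x i) = bsgn (b j)) →
      (∀ j, ∏ i ∈ Finset.univ.filter (fun i => v j i = 1), bsgn (y i) = bsgn (b j)) →
      f x = f y) :
    renyiEntropy f (1 + δ) ≤ 2 * (1 + 1 / δ) * k := by
  classical
  set e : Finset (Fin k) → ℝ := fun T => ∏ j ∈ T, bsgn (b j) with he
  set P : (Fin n → Bool) → ℝ :=
    fun x => ∏ j : Fin k, (1 + bsgn (b j) * eChar (v j) x) with hP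
  set S : Finset (Fin k) → Finset (Fin n) :=
    fun T => Finset.univ.filter (fun i => (∑ j ∈ T, v j) i = 1) with hS
  -- expansion of the product
  have hPexp : ∀ x, P x = ∑ T : Finset (Fin k), e T * eChar (∑ j ∈ T, v j) x := by
    intro x
    calc P x = ∏ j : Fin k, (bsgn (b j) * eChar (v j) x + 1) := by
          simp only [hP, add_comm]
      _ = ∑ t : Finset (Fin k),
            (∏ j ∈ t, (bsgn (b j) * eChar (v j) x)) * ∏ _j ∈ tᶜ, (1:ℝ) :=
          Fintype.prod_add _ _
      _ = ∑ T : Finset (Fin k), e T * eChar (∑ j ∈ T, v j) x := by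
          refine Finset.sum_congr rfl fun T _ => ?_
          rw [Finset.prod_const_one, mul_one, eChar_sum, Finset.prod_mul_distrib]
  -- linear independence: nonempty sums are nonzero
  have hne : ∀ T : Finset (Fin k), T ≠ ∅ → (∑ j ∈ T, v j) ≠ 0 := by
    intro T hT h0
    obtain ⟨j0, hj0⟩ := Finset.nonempty_iff_ne_empty.mpr hT
    have hg : (∑ j : Fin k, (if j ∈ T then (1:ZMod 2) else 0) • v j) = 0 := by
      simp only [ite_smul, one_smul, zero_smul]
      rwa [Finset.sum_ite_mem, Finset.univ_inter]
    have := Fintype.linearIndependent_iff.mp hv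
      (fun j => if j ∈ T then (1:ZMod 2) else 0) hg j0
    simp [hj0] at this
  -- total mass of P
  have hPB : ∑ x : Fin n → Bool, P x = 2 ^ n := by
    calc ∑ x : Fin n → Bool, P x
        = ∑ x : Fin n → Bool, ∑ T : Finset (Fin k), e T * eChar (∑ j ∈ T, v j) x :=
          Finset.sum_congr rfl fun x _ => hPexp x
      _ = ∑ T : Finset (Fin k), e T * ∑ x : Fin n → Bool, eChar (∑ j ∈ T, v j) x := by
          rw [Finset.sum_comm]
          simp [Finset.mul_sum]
      _ = 2 ^ n := by
          rw [Finset.sum_eq_single ∅]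
          · simp [he, eChar_total]
          · intro T _ hT
            rw [eChar_total, if_neg (hne T hT), mul_zero]
          · simp
  -- sum with f
  have hFB : ∑ x : Fin n → Bool, f x * P x
      = ∑ T : Finset (Fin k), e T * ((2:ℝ) ^ n * fCoeff f (S T)) := by
    calc ∑ x : Fin n → Bool, f x * P x
        = ∑ x : Fin n → Bool, ∑ T : Finset (Fin k),
            e T * (f x * eChar (∑ j ∈ T, v j) x) := by
          refine Finset.sum_congr rfl fun x _ => ?_
          rw [hPexp x, Finset.mul_sum]
          refine Finset.sum_congr rfl fun T _ => ?_
          ring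
      _ = ∑ T : Finset (Fin k), e T *
            (∑ x : Fin n → Bool, f x * eChar (∑ j ∈ T, v j) x) := by
          rw [Finset.sum_comm]
          simp [Finset.mul_sum]
      _ = ∑ T : Finset (Fin k), e T * ((2:ℝ) ^ n * fCoeff f (S T)) := by
          refine Finset.sum_congr rfl fun T _ => ?_
          congr 1
          rw [fCoeff, mul_div_cancel₀ _ (by positivity : ((2:ℝ)^n) ≠ 0)]
          refine Finset.sum_congr rfl fun x _ => ?_
          rw [eChar_eq_chi]
  -- membership in the subspace from nonvanishing of P
  have hmem : ∀ x, P x ≠ 0 → ∀ j,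
      ∏ i ∈ Finset.univ.filter (fun i => v j i = 1), bsgn (x i) = bsgn (b j) := by
    intro x hx j
    have hfac : (1 + bsgn (b j) * eChar (v j) x) ≠ 0 := by
      intro h
      exact hx (Finset.prod_eq_zero (Finset.mem_univ j) h)
    have : eChar (v j) x = bsgn (b j) := by
      rcases bsgn_cases (b j) with h1 | h1 <;>
        rcases eChar_abs (v j) x with h2 | h2 <;>
        rw [h1, h2] at hfac ⊢ <;> norm_num at hfac
    rw [← this, eChar_eq_chi, chi]
  -- a point of the subspace
  have hx0 : ∃ x0 : Fin n → Bool, P x0 ≠ 0 := by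
    by_contra h
    push_neg at h
    rw [Finset.sum_congr rfl (fun x _ => h x), Finset.sum_const, smul_zero] at hPB
    exact absurd hPB.symm (by positivity)
  obtain ⟨x0, hx0⟩ := hx0
  -- f x * P x = f x0 * P x
  have hfP : ∀ x, f x * P x = f x0 * P x := by
    intro x
    by_cases hx : P x = 0
    · rw [hx, mul_zero, mul_zero]
    · exact congrArg (· * P x) (hconst x x0 (hmem x hx) (hmem x0 hx0))
  have hsum : ∑ T : Finset (Fin k), e T * fCoeff f (S T) = f x0 := by
    have h1 : ∑ x : Fin n → Bool, f x * P x = f x0 * 2 ^ n := by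
      rw [Finset.sum_congr rfl (fun x _ => hfP x), ← Finset.mul_sum, hPB]
    rw [hFB] at h1
    have h2 : ((2:ℝ) ^ n) ≠ 0 := by positivity
    have h3 : (∑ T : Finset (Fin k), e T * fCoeff f (S T)) * 2 ^ n
        = f x0 * 2 ^ n := by
      rw [Finset.sum_mul, ← h1]
      refine Finset.sum_congr rfl fun T _ => by ring
    exact mul_right_cancel₀ h2 h3
  -- absolute value bound
  have heT : ∀ T : Finset (Fin k), |e T| = 1 := by
    intro T
    rw [he, Finset.abs_prod]
    refine Finset.prod_eq_one fun j _ => ?_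
    rcases bsgn_cases (b j) with h | h <;> rw [h] <;> norm_num
  have habs : 1 ≤ ∑ T : Finset (Fin k), |fCoeff f (S T)| := by
    have hc : |f x0| = 1 := by rcases hf x0 with h | h <;> rw [h] <;> norm_num
    calc (1:ℝ) = |f x0| := hc.symm
      _ = |∑ T : Finset (Fin k), e T * fCoeff f (S T)| := by rw [hsum]
      _ ≤ ∑ T : Finset (Fin k), |e T * fCoeff f (S T)| := Finset.abs_sum_le_sum_abs _ _
      _ = ∑ T : Finset (Fin k), |fCoeff f (S T)| := by
          refine Finset.sum_congr rfl fun T _ => ?_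
          rw [abs_mul, heT, one_mul]
  -- a large Fourier coefficient
  have hbig : ∃ S0 : Finset (Fin n), ((2:ℝ) ^ k)⁻¹ ≤ |fCoeff f S0| := by
    by_contra h
    push_neg at h
    have hlt : ∑ T : Finset (Fin k), |fCoeff f (S T)|
        < ∑ _T : Finset (Fin k), ((2:ℝ) ^ k)⁻¹ :=
      Finset.sum_lt_sum_of_nonempty Finset.univ_nonempty (fun T _ => h _)
    rw [Finset.sum_const, Finset.card_univ, Fintype.card_finset, Fintype.card_fin,
      nsmul_eq_mul] at hlt
    push_cast at hlt
    rw [mul_inv_cancel₀ (by positivity : ((2:ℝ)^k) ≠ 0)] at hlt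
    linarith
  obtain ⟨S0, hS0⟩ := hbig
  -- lower bound on the Renyi sum
  set A : ℝ := ∑ S : Finset (Fin n), |fCoeff f S| ^ (2 * (1 + δ)) with hA
  have hk2 : (2:ℝ) ^ (-(k:ℝ)) = ((2:ℝ) ^ k)⁻¹ := by
    rw [Real.rpow_neg (by norm_num), Real.rpow_natCast]
  have hApos : (2:ℝ) ^ (-(k:ℝ) * (2 * (1 + δ))) ≤ A := by
    have t1 : ((2:ℝ) ^ (-(k:ℝ))) ^ (2 * (1 + δ)) ≤ |fCoeff f S0| ^ (2 * (1 + δ)) := by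
      refine Real.rpow_le_rpow (by positivity) ?_ (by positivity)
      rw [hk2]; exact hS0
    have t2 : (2:ℝ) ^ (-(k:ℝ) * (2 * (1 + δ)))
        = ((2:ℝ) ^ (-(k:ℝ))) ^ (2 * (1 + δ)) :=
      Real.rpow_mul (by norm_num) _ _
    calc (2:ℝ) ^ (-(k:ℝ) * (2 * (1 + δ)))
        ≤ |fCoeff f S0| ^ (2 * (1 + δ)) := by rw [t2]; exact t1
      _ ≤ A := Finset.single_le_sum
          (fun S _ => Real.rpow_nonneg (abs_nonneg _) _) (Finset.mem_univ S0)
  have hlogb : -(k:ℝ) * (2 * (1 + δ)) ≤ Real.logb 2 A := by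
    calc -(k:ℝ) * (2 * (1 + δ))
        = Real.logb 2 ((2:ℝ) ^ (-(k:ℝ) * (2 * (1 + δ)))) :=
          (Real.logb_rpow (by norm_num) (by norm_num)).symm
      _ ≤ Real.logb 2 A :=
          Real.logb_le_logb_of_le (by norm_num) (by positivity) hApos
  -- conclude
  rw [renyiEntropy]
  have hd : (1:ℝ) - (1 + δ) = -δ := by ring
  rw [hd, ← hA]
  have hfac : (1:ℝ) / (-δ) ≤ 0 := by
    rw [one_div]
    simp only [inv_nonpos]
    linarith
  have step : (1 / (-δ)) * Real.logb 2 A ≤ (1 / (-δ)) * (-(k:ℝ) * (2 * (1 + δ))) :=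
    mul_le_mul_of_nonpos_left hlogb hfac
  refine step.trans (le_of_eq ?_)
  field_simp
  ring
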